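/- arXiv:0810.3196 — 2 statements merged into one kernel-verified Lean document; each statement's English description precedes it below -/
import Mathlib

section
/- For any equivalence relation ≈ on E⁺, the chain of inclusions ≈_min ⊆ (≈_min)^tc ⊆ ≈ ⊆ (≈_min)^ic holds, where ^tc denotes transitive closure and ^ic denotes invariant closure. -/
def FS (E : Type*) := {l : List E // l ≠ []}

def fsMul {E : Type*} (u v : FS E) : FS E := ⟨u.1 ++ v.1, by simp [u.2]⟩

def prepend {E : Type*} (a : E) (u : FS E) : FS E := ⟨a :: u.1, by simp⟩

def append {E : Type*} (u : FS E) (a : E) : FS E := ⟨u.1 ++ [a], by simp⟩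

/-- `u ≈_min v`: `u ≈ v`, and they do not share a strippable common first letter
nor a strippable common last letter. -/
def rMin {E : Type*} (r : FS E → FS E → Prop) (u v : FS E) : Prop :=
  r u v ∧
  ¬ (∃ (a : E) (u' v' : FS E), u = prepend a u' ∧ v = prepend a v' ∧ r u' v') ∧
  ¬ (∃ (b : E) (u'' v'' : FS E), u = append u'' b ∧ v = append v'' b ∧ r u'' v'')

/-- Surround a word by lists of letters on both sides. -/
def surround {E : Type*} (as : List E) (u : FS E) (bs : List E) : FS E :=
  ⟨as ++ u.1 ++ bs, by simp [u.2]⟩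

/-- Invariant closure of a relation on `E⁺`. -/
def invClosure {E : Type*} (r : FS E → FS E → Prop) (u v : FS E) : Prop :=
  ∃ (as bs : List E) (u' v' : FS E),
    u = surround as u' bs ∧ v = surround as v' bs ∧ r u' v'

/-- Transitive closure via finite chains. -/
def chainTC {α : Type*} (r : α → α → Prop) (a b : α) : Prop :=
  a = b ∨ ∃ n : ℕ, 1 ≤ n ∧ ∃ c : Fin (n + 1) → α,
    c 0 = a ∧ c (Fin.last n) = b ∧ ∀ i : Fin n, r (c i.castSucc) (c i.succ)

lemma aux_inv {E : Type*} (r : FS E → FS E → Prop) :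
    ∀ n (u v : FS E), u.1.length ≤ n → r u v → invClosure (rMin r) u v := by
  intro n
  induction n with
  | zero =>
    intro u v hlen _
    exact absurd (List.length_eq_zero_iff.mp (Nat.le_zero.mp hlen)) u.2
  | succ n ih =>
    intro u v hlen huv
    by_cases h1 : ∃ (a : E) (u' v' : FS E), u = prepend a u' ∧ v = prepend a v' ∧ r u' v'
    · obtain ⟨a, u', v', hu, hv, h'⟩ := h1
      have hl : u'.1.length ≤ n := by
        have : u.1.length = u'.1.length + 1 := by rw [hu]; simp [prepend]
        omega
      obtain ⟨as, bs, w, w', hw, hw', hr⟩ := ih u' v' hl h'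
      refine ⟨a :: as, bs, w, w', ?_, ?_, hr⟩
      · rw [hu, hw]; simp [prepend, surround]; rfl
      · rw [hv, hw']; simp [prepend, surround]; rfl
    · by_cases h2 : ∃ (b : E) (u'' v'' : FS E), u = append u'' b ∧ v = append v'' b ∧ r u'' v''
      · obtain ⟨b, u', v', hu, hv, h'⟩ := h2
        have hl : u'.1.length ≤ n := by
          have : u.1.length = u'.1.length + 1 := by rw [hu]; simp [append]
          omega
        obtain ⟨as, bs, w, w', hw, hw', hr⟩ := ih u' v' hl h'
        refine ⟨as, bs ++ [b], w, w', ?_, ?_, hr⟩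
        · rw [hu, hw]; simp [append, surround]; rfl
        · rw [hv, hw']; simp [append, surround]; rfl
      · refine ⟨[], [], u, v, ?_, ?_, huv, h1, h2⟩
        · apply Subtype.ext; simp [surround]
        · apply Subtype.ext; simp [surround]

/-- For any equivalence relation `≈` on `E⁺`:
`≈_min ⊆ (≈_min)^tc ⊆ ≈ ⊆ (≈_min)^ic`. -/
theorem rMin_inclusions {E : Type*} (r : FS E → FS E → Prop)
    (hequiv : Equivalence r) :
    (∀ u v : FS E, rMin r u v → chainTC (rMin r) u v) ∧
    (∀ u v : FS E, chainTC (rMin r) u v → r u v) ∧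
    (∀ u v : FS E, r u v → invClosure (rMin r) u v) := by
  refine ⟨?_, ?_, ?_⟩
  · intro u v h
    refine Or.inr ⟨1, le_refl 1, ![u, v], rfl, rfl, ?_⟩
    intro i
    fin_cases i
    simpa using h
  · intro u v h
    rcases h with rfl | ⟨n, hn, c, hc0, hcl, hstep⟩
    · exact hequiv.refl u
    · have key : ∀ k (hk : k ≤ n), r (c 0) (c ⟨k, by omega⟩) := by
        intro k
        induction k with
        | zero => intro _; exact hequiv.refl _
        | succ k ihk =>
          intro hk
          have h1 := ihk (by omega)
          have h2 := hstep ⟨k, by omega⟩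
          have e1 : (Fin.castSucc ⟨k, by omega⟩ : Fin (n+1)) = ⟨k, by omega⟩ := rfl
          have e2 : (Fin.succ ⟨k, by omega⟩ : Fin (n+1)) = ⟨k+1, by omega⟩ := rfl
          rw [e1, e2] at h2
          exact hequiv.trans h1 h2.1
      have := key n le_rfl
      rw [hc0] at this
      have hl : (Fin.last n : Fin (n+1)) = ⟨n, by omega⟩ := rfl
      rw [hl] at hcl
      rwa [hcl] at this
  · intro u v huv
    exact aux_inv r u.1.length u v le_rfl huv
end

section
/- An equivalence relation ≈ on the free semigroup E⁺ is a congruence if and only if ≈ equals the invariant closure (≈_min)^ic of its minimal part ≈_min. -/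
lemma FS.ext' {E : Type*} {u v : FS E} (h : u.1 = v.1) : u = v := Subtype.ext h

lemma FS.len_pos {E : Type*} (u : FS E) : 0 < u.1.length :=
  List.length_pos_iff.mpr u.2

lemma strip_to_min {E : Type*} (r : FS E → FS E → Prop) :
    ∀ n (u v : FS E), u.1.length + v.1.length ≤ n → r u v → invClosure (rMin r) u v := by
  intro n
  induction n with
  | zero =>
    intro u v hlen _
    have := FS.len_pos u
    omega
  | succ n ih =>
    intro u v hlen hr
    by_cases h1 : ∃ (a : E) (u' v' : FS E), u = prepend a u' ∧ v = prepend a v' ∧ r u' v'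
    · obtain ⟨a, u', v', hu, hv, hr'⟩ := h1
      have hlen' : u'.1.length + v'.1.length ≤ n := by
        subst hu hv; simp [prepend] at hlen; omega
      obtain ⟨as, bs, x, y, hx, hy, hmin⟩ := ih u' v' hlen' hr'
      refine ⟨a :: as, bs, x, y, ?_, ?_, hmin⟩
      · subst hu; apply FS.ext'; simp [prepend, surround, hx]
      · subst hv; apply FS.ext'; simp [prepend, surround, hy]
    · by_cases h2 : ∃ (b : E) (u'' v'' : FS E), u = append u'' b ∧ v = append v'' b ∧ r u'' v''
      · obtain ⟨b, u', v', hu, hv, hr'⟩ := h2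
        have hlen' : u'.1.length + v'.1.length ≤ n := by
          subst hu hv; simp [append] at hlen; omega
        obtain ⟨as, bs, x, y, hx, hy, hmin⟩ := ih u' v' hlen' hr'
        refine ⟨as, bs ++ [b], x, y, ?_, ?_, hmin⟩
        · subst hu; apply FS.ext'; simp [append, surround, hx]
        · subst hv; apply FS.ext'; simp [append, surround, hy]
      · refine ⟨[], [], u, v, ?_, ?_, hr, h1, h2⟩
        · apply FS.ext'; simp [surround]
        · apply FS.ext'; simp [surround]

/-- An equivalence relation on the free semigroup `E⁺` is a congruence iff it
equals the invariant closure of its minimal part `≈_min`. -/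
theorem congruence_iff_invClosure_rMin {E : Type*} (r : FS E → FS E → Prop)
    (hequiv : Equivalence r) :
    (∀ u v w : FS E, r u v → r (fsMul u w) (fsMul v w) ∧ r (fsMul w u) (fsMul w v)) ↔
    (∀ u v : FS E, r u v ↔ invClosure (rMin r) u v) := by
  constructor
  · intro hcong u v
    constructor
    · intro hr
      exact strip_to_min r (u.1.length + v.1.length) u v le_rfl hr
    · rintro ⟨as, bs, x, y, hx, hy, hmin⟩
      have hr : r x y := hmin.1
      -- first append bs on the right
      have step1 : r ⟨x.1 ++ bs, by simp [x.2]⟩ ⟨y.1 ++ bs, by simp [y.2]⟩ := by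
        rcases bs with _ | ⟨b, bs'⟩
        · have hx' : (⟨x.1 ++ [], by simp [x.2]⟩ : FS E) = x := by apply FS.ext'; simp
          have hy' : (⟨y.1 ++ [], by simp [y.2]⟩ : FS E) = y := by apply FS.ext'; simp
          rw [hx', hy']; exact hr
        · exact (hcong x y ⟨b :: bs', by simp⟩ hr).1
      -- then prepend as on the left
      have step2 : r ⟨as ++ (x.1 ++ bs), by simp [x.2]⟩ ⟨as ++ (y.1 ++ bs), by simp [y.2]⟩ := by
        rcases as with _ | ⟨a, as'⟩
        · simpa using step1
        · exact (hcong _ _ ⟨a :: as', by simp⟩ step1).2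
      have hxu : u = ⟨as ++ (x.1 ++ bs), by simp [x.2]⟩ := by
        rw [hx]; apply FS.ext'; simp [surround]
      have hyv : v = ⟨as ++ (y.1 ++ bs), by simp [y.2]⟩ := by
        rw [hy]; apply FS.ext'; simp [surround]
      rw [hxu, hyv]; exact step2
  · intro h u v w hr
    obtain ⟨as, bs, x, y, hx, hy, hmin⟩ := (h u v).1 hr
    constructor
    · apply (h _ _).2
      refine ⟨as, bs ++ w.1, x, y, ?_, ?_, hmin⟩
      · apply FS.ext'; simp [fsMul, surround, hx]
      · apply FS.ext'; simp [fsMul, surround, hy]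
    · apply (h _ _).2
      refine ⟨w.1 ++ as, bs, x, y, ?_, ?_, hmin⟩
      · apply FS.ext'; simp [fsMul, surround, hx]
      · apply FS.ext'; simp [fsMul, surround, hy]
end
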